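/- arXiv:1911.13070 — 2 statements merged into one kernel-verified Lean document; each statement's English description precedes it below -/
import Mathlib

section
/- Let E : H → ℝ be a sublinear expectation and let p, q > 1 with 1/p + 1/q = 1. Then for X, Y ∈ H with |XY|, |X|^p, |Y|^q ∈ H, E[|XY|] ≤ (E[|X|^p])^{1/p} · (E[|Y|^q])^{1/q}. -/
/-- Sublinear combination bound: if `h ≤ a f + b g` pointwise with `f, g ≥ 0`,
then `E h ≤ a E f + b E g`, proved by integer-scaling approximation. -/
theorem sublin_aux {Ω : Type*} (H : Set (Ω → ℝ)) (E : (Ω → ℝ) → ℝ)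
    (hconst : ∀ c : ℝ, (fun _ : Ω => c) ∈ H)
    (hadd : ∀ X ∈ H, ∀ Y ∈ H, X + Y ∈ H)
    (hmono : ∀ X ∈ H, ∀ Y ∈ H, (∀ ω, X ω ≤ Y ω) → E X ≤ E Y)
    (hE_const : ∀ c : ℝ, E (fun _ => c) = c)
    (hsubadd : ∀ X ∈ H, ∀ Y ∈ H, E (X + Y) ≤ E X + E Y)
    (hposhom : ∀ X ∈ H, ∀ c : ℝ, 0 < c → E (c • X) = c * E X)
    (f g h : Ω → ℝ) (hf : f ∈ H) (hg : g ∈ H) (hh : h ∈ H)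
    (hf0 : ∀ ω, 0 ≤ f ω) (hg0 : ∀ ω, 0 ≤ g ω)
    (a b : ℝ) (ha : 0 < a) (hb : 0 < b)
    (hle : ∀ ω, h ω ≤ a * f ω + b * g ω) :
    E h ≤ a * E f + b * E g := by
  -- natural multiples stay in H
  have hnsmul : ∀ u : Ω → ℝ, u ∈ H → ∀ n : ℕ, ((n : ℝ) • u) ∈ H := by
    intro u hu n
    induction n with
    | zero =>
      have : ((0 : ℕ) : ℝ) • u = fun _ : Ω => (0 : ℝ) := by
        funext ω; simp
      rw [this]; exact hconst 0
    | succ k ih =>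
      have : (((k + 1 : ℕ) : ℝ)) • u = ((k : ℝ) • u) + u := by
        funext ω; simp [add_mul]
      rw [this]; exact hadd _ ih _ hu
  have hEf0 : 0 ≤ E f := by
    have := hmono _ (hconst 0) _ hf (fun ω => hf0 ω)
    rwa [hE_const] at this
  have hEg0 : 0 ≤ E g := by
    have := hmono _ (hconst 0) _ hg (fun ω => hg0 ω)
    rwa [hE_const] at this
  -- for each n ≥ 1, E h ≤ a E f + b E g + (E f + E g)/n
  have key : ∀ n : ℕ, 1 ≤ n →
      E h ≤ a * E f + b * E g + (E f + E g) / n := by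
    intro n hn
    have hn0 : (0 : ℝ) < n := by exact_mod_cast hn
    set m₁ : ℕ := ⌈(n : ℝ) * a⌉₊ with hm₁
    set m₂ : ℕ := ⌈(n : ℝ) * b⌉₊ with hm₂
    have hna : 0 < (n : ℝ) * a := by positivity
    have hnb : 0 < (n : ℝ) * b := by positivity
    have hm₁0 : (0 : ℝ) < m₁ := by
      have : (n : ℝ) * a ≤ m₁ := Nat.le_ceil _
      linarith
    have hm₂0 : (0 : ℝ) < m₂ := by
      have : (n : ℝ) * b ≤ m₂ := Nat.le_ceil _
      linarith
    have step1 : E ((n : ℝ) • h) ≤ E (((m₁ : ℝ) • f) + ((m₂ : ℝ) • g)) := by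
      apply hmono _ (hnsmul h hh n) _ (hadd _ (hnsmul f hf m₁) _ (hnsmul g hg m₂))
      intro ω
      have h1 : (n : ℝ) * h ω ≤ (n : ℝ) * (a * f ω + b * g ω) :=
        mul_le_mul_of_nonneg_left (hle ω) (le_of_lt hn0)
      have h2 : (n : ℝ) * a * f ω ≤ (m₁ : ℝ) * f ω :=
        mul_le_mul_of_nonneg_right (Nat.le_ceil _) (hf0 ω)
      have h3 : (n : ℝ) * b * g ω ≤ (m₂ : ℝ) * g ω :=
        mul_le_mul_of_nonneg_right (Nat.le_ceil _) (hg0 ω)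
      simp only [Pi.add_apply, Pi.smul_apply, smul_eq_mul]
      nlinarith
    have step2 : E (((m₁ : ℝ) • f) + ((m₂ : ℝ) • g)) ≤ (m₁ : ℝ) * E f + (m₂ : ℝ) * E g := by
      have := hsubadd _ (hnsmul f hf m₁) _ (hnsmul g hg m₂)
      rwa [hposhom _ hf _ hm₁0, hposhom _ hg _ hm₂0] at this
    have step3 : (n : ℝ) * E h ≤ (m₁ : ℝ) * E f + (m₂ : ℝ) * E g := by
      rw [← hposhom _ hh _ hn0]; exact le_trans step1 step2
    have hc₁ : (m₁ : ℝ) ≤ (n : ℝ) * a + 1 := le_of_lt (Nat.ceil_lt_add_one (le_of_lt hna))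
    have hc₂ : (m₂ : ℝ) ≤ (n : ℝ) * b + 1 := le_of_lt (Nat.ceil_lt_add_one (le_of_lt hnb))
    have step4 : (n : ℝ) * E h ≤ ((n : ℝ) * a + 1) * E f + ((n : ℝ) * b + 1) * E g := by
      have h2 : (m₁ : ℝ) * E f ≤ ((n : ℝ) * a + 1) * E f :=
        mul_le_mul_of_nonneg_right hc₁ hEf0
      have h3 : (m₂ : ℝ) * E g ≤ ((n : ℝ) * b + 1) * E g :=
        mul_le_mul_of_nonneg_right hc₂ hEg0
      linarith
    calc E h = ((n : ℝ) * E h) / n := by field_simp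
      _ ≤ (((n : ℝ) * a + 1) * E f + ((n : ℝ) * b + 1) * E g) / n := by gcongr
      _ = a * E f + b * E g + (E f + E g) / n := by field_simp; ring
  refine le_of_forall_pos_le_add ?_
  intro ε hε
  obtain ⟨n, hn⟩ := exists_nat_gt (max 1 ((E f + E g) / ε))
  have hn1 : 1 ≤ n := by
    have : (1 : ℝ) ≤ n := le_of_lt (lt_of_le_of_lt (le_max_left _ _) hn)
    exact_mod_cast this
  have hn0 : (0 : ℝ) < n := by exact_mod_cast hn1
  have hlast : (E f + E g) / n ≤ ε := by
    rw [div_le_iff₀ hn0]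
    have : (E f + E g) / ε < n := lt_of_le_of_lt (le_max_right _ _) hn
    rw [div_lt_iff₀ hε] at this
    linarith
  calc E h ≤ a * E f + b * E g + (E f + E g) / n := key n hn1
    _ ≤ a * E f + b * E g + ε := by linarith



/-- Hölder's inequality for sublinear expectations:
`E[|XY|] ≤ (E[|X|^p])^(1/p) · (E[|Y|^q])^(1/q)` for conjugate exponents `p, q > 1`. -/
theorem stmt_5 {Ω : Type*} (H : Set (Ω → ℝ)) (E : (Ω → ℝ) → ℝ)
    (hconst : ∀ c : ℝ, (fun _ : Ω => c) ∈ H)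
    (hadd : ∀ X ∈ H, ∀ Y ∈ H, X + Y ∈ H)
    (hneg : ∀ X ∈ H, -X ∈ H)
    (hmono : ∀ X ∈ H, ∀ Y ∈ H, (∀ ω, X ω ≤ Y ω) → E X ≤ E Y)
    (hE_const : ∀ c : ℝ, E (fun _ => c) = c)
    (hsubadd : ∀ X ∈ H, ∀ Y ∈ H, E (X + Y) ≤ E X + E Y)
    (hposhom : ∀ X ∈ H, ∀ c : ℝ, 0 < c → E (c • X) = c * E X)
    (p q : ℝ) (hp : 1 < p) (hq : 1 < q) (hpq : 1 / p + 1 / q = 1)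
    (X Y : Ω → ℝ) (hX : X ∈ H) (hY : Y ∈ H)
    (hXY : (fun ω => |X ω * Y ω|) ∈ H)
    (hXp : (fun ω => |X ω| ^ p) ∈ H)
    (hYq : (fun ω => |Y ω| ^ q) ∈ H) :
    E (fun ω => |X ω * Y ω|) ≤
      (E (fun ω => |X ω| ^ p)) ^ (1 / p) * (E (fun ω => |Y ω| ^ q)) ^ (1 / q) := by
  have hp0 : (0 : ℝ) < p := lt_trans one_pos hp
  have hq0 : (0 : ℝ) < q := lt_trans one_pos hq
  have hpne : p ≠ 0 := ne_of_gt hp0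
  have hqne : q ≠ 0 := ne_of_gt hq0
  have hconj : Real.HolderConjugate p q :=
    Real.holderConjugate_iff.mpr ⟨hp, by rw [inv_eq_one_div, inv_eq_one_div]; exact hpq⟩
  set f : Ω → ℝ := fun ω => |X ω| ^ p with hfdef
  set g : Ω → ℝ := fun ω => |Y ω| ^ q with hgdef
  set h : Ω → ℝ := fun ω => |X ω * Y ω| with hhdef
  set A := E f with hAdef
  set B := E g with hBdef
  have hf0 : ∀ ω, 0 ≤ f ω := fun ω => Real.rpow_nonneg (abs_nonneg _) _
  have hg0 : ∀ ω, 0 ≤ g ω := fun ω => Real.rpow_nonneg (abs_nonneg _) _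
  have hA0 : 0 ≤ A := by
    have := hmono _ (hconst 0) _ hXp (fun ω => hf0 ω)
    rwa [hE_const] at this
  have hB0 : 0 ≤ B := by
    have := hmono _ (hconst 0) _ hYq (fun ω => hg0 ω)
    rwa [hE_const] at this
  -- key inequality: for every t > 0
  have key : ∀ t : ℝ, 0 < t → E h ≤ (t ^ p / p) * A + (t ^ (-q) / q) * B := by
    intro t ht
    apply sublin_aux H E hconst hadd hmono hE_const hsubadd hposhom f g h hXp hYq hXY
      hf0 hg0 _ _ (by positivity) (by positivity)
    intro ω
    have hy := Real.young_inequality_of_nonneg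
      (mul_nonneg (le_of_lt ht) (abs_nonneg (X ω)))
      (mul_nonneg (le_of_lt (inv_pos.mpr ht)) (abs_nonneg (Y ω))) hconj
    have e0 : t * |X ω| * (t⁻¹ * |Y ω|) = |X ω * Y ω| := by
      rw [abs_mul]; field_simp
    have e1 : (t * |X ω|) ^ p = t ^ p * |X ω| ^ p :=
      Real.mul_rpow (le_of_lt ht) (abs_nonneg _)
    have e2 : (t⁻¹ * |Y ω|) ^ q = t ^ (-q) * |Y ω| ^ q := by
      rw [Real.mul_rpow (le_of_lt (inv_pos.mpr ht)) (abs_nonneg _),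
        Real.inv_rpow (le_of_lt ht), ← Real.rpow_neg (le_of_lt ht)]
    rw [e0, e1, e2] at hy
    calc h ω = |X ω * Y ω| := rfl
      _ ≤ t ^ p * |X ω| ^ p / p + t ^ (-q) * |Y ω| ^ q / q := hy
      _ = t ^ p / p * f ω + t ^ (-q) / q * g ω := by ring
  have h1q : 1 - 1 / q = 1 / p := by linarith
  have h1p : 1 - 1 / p = 1 / q := by linarith
  rcases eq_or_lt_of_le hA0 with hA | hA
  · -- A = 0 : RHS = 0, show E h ≤ 0
    rw [← hA, Real.zero_rpow (one_div_ne_zero hpne), zero_mul]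
    refine le_of_forall_pos_le_add ?_
    intro ε hε
    rcases eq_or_lt_of_le hB0 with hB | hB
    · have := key 1 one_pos
      simp only [Real.one_rpow, ← hA, ← hB, mul_zero] at this
      linarith
    · set t : ℝ := (B / (q * ε)) ^ (1 / q) with htdef
      have hx : 0 < B / (q * ε) := by positivity
      have ht : 0 < t := Real.rpow_pos_of_pos hx _
      have htq : t ^ (-q) = q * ε / B := by
        rw [htdef, ← Real.rpow_mul (le_of_lt hx)]
        rw [show 1 / q * (-q) = -1 by field_simp]
        rw [Real.rpow_neg_one]
        field_simp
      have := key t ht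
      rw [htq, ← hA, mul_zero] at this
      have : E h ≤ q * ε / B / q * B := by linarith
      calc E h ≤ q * ε / B / q * B := this
        _ = ε := by field_simp
        _ ≤ 0 + ε := by linarith
  rcases eq_or_lt_of_le hB0 with hB | hB
  · -- B = 0 : RHS = 0
    rw [← hB, Real.zero_rpow (one_div_ne_zero hqne), mul_zero]
    refine le_of_forall_pos_le_add ?_
    intro ε hε
    set t : ℝ := (p * ε / A) ^ (1 / p) with htdef
    have hx : 0 < p * ε / A := by positivity
    have ht : 0 < t := Real.rpow_pos_of_pos hx _
    have htp : t ^ p = p * ε / A := by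
      rw [htdef, ← Real.rpow_mul (le_of_lt hx)]
      rw [show 1 / p * p = 1 by field_simp, Real.rpow_one]
    have := key t ht
    rw [htp, ← hB, mul_zero] at this
    calc E h ≤ p * ε / A / p * A + 0 := this
      _ = ε := by field_simp; ring
      _ ≤ 0 + ε := by linarith
  · -- main case A, B > 0
    set t : ℝ := (B / A) ^ (1 / (p * q)) with htdef
    have hx : 0 < B / A := by positivity
    have ht : 0 < t := Real.rpow_pos_of_pos hx _
    have htp : t ^ p = (B / A) ^ (1 / q) := by
      rw [htdef, ← Real.rpow_mul (le_of_lt hx)]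
      congr 1
      field_simp
    have htq : t ^ (-q) = (B / A) ^ (-(1 / p)) := by
      rw [htdef, ← Real.rpow_mul (le_of_lt hx)]
      congr 1
      field_simp
    have term1 : t ^ p / p * A = A ^ (1 / p) * B ^ (1 / q) * (1 / p) := by
      rw [htp, Real.div_rpow (le_of_lt hB) (le_of_lt hA)]
      have : A ^ (1 / p) = A / A ^ (1 / q) := by
        rw [← h1q, Real.rpow_sub hA, Real.rpow_one]
      rw [this]
      field_simp
    have term2 : t ^ (-q) / q * B = A ^ (1 / p) * B ^ (1 / q) * (1 / q) := by
      rw [htq, Real.rpow_neg (le_of_lt hx), Real.div_rpow (le_of_lt hB) (le_of_lt hA)]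
      have : B ^ (1 / q) = B / B ^ (1 / p) := by
        rw [← h1p, Real.rpow_sub hB, Real.rpow_one]
      rw [this]
      have hBp : 0 < B ^ (1 / p) := Real.rpow_pos_of_pos hB _
      have hAp : 0 < A ^ (1 / p) := Real.rpow_pos_of_pos hA _
      field_simp
    have := key t ht
    rw [term1, term2] at this
    calc E h ≤ A ^ (1 / p) * B ^ (1 / q) * (1 / p) + A ^ (1 / p) * B ^ (1 / q) * (1 / q) := this
      _ = A ^ (1 / p) * B ^ (1 / q) * (1 / p + 1 / q) := by ring
      _ = A ^ (1 / p) * B ^ (1 / q) := by rw [hpq, mul_one]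
end

section
/- Let u : ℝ≥0 → ℝ≥0 be continuous and satisfy u(t) ≤ A·∫_{t₀}^{t} u(s) ds + B·(t − t₀)² for all t ∈ [t₀, t₁], where A, B ≥ 0. Then u(t) ≤ B·e^{A(t−t₀)}·(t − t₀)² for all t ∈ [t₀, t₁]. -/
open Set Real intervalIntegral MeasureTheory

/-- Gronwall-type lemma: if a continuous nonnegative `u` satisfies
`u t ≤ A ∫_{t₀}^t u + B (t−t₀)²` on `[t₀,t₁]`, then `u t ≤ B e^{A(t−t₀)} (t−t₀)²`. -/
theorem stmt_9 (u : ℝ → ℝ) (t₀ t₁ A B : ℝ) (ht₀ : 0 ≤ t₀) (ht : t₀ ≤ t₁)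
    (hA : 0 ≤ A) (hB : 0 ≤ B)
    (hu_cont : ContinuousOn u (Set.Icc t₀ t₁))
    (hu_nonneg : ∀ t ∈ Set.Icc t₀ t₁, 0 ≤ u t)
    (hbound : ∀ t ∈ Set.Icc t₀ t₁,
      u t ≤ A * ∫ s in t₀..t, u s + B * (t - t₀) ^ 2) :
    ∀ t ∈ Set.Icc t₀ t₁, u t ≤ B * Real.exp (A * (t - t₀)) * (t - t₀) ^ 2 := by
  intro t htmem
  obtain ⟨ht₀t, htt₁⟩ := htmem
  -- trivial case A = 0
  rcases eq_or_lt_of_le hA with hA0 | hApos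
  · have := hbound t ⟨ht₀t, htt₁⟩
    rw [← hA0] at this
    simp only [zero_mul] at this
    have : (0:ℝ) ≤ B * Real.exp (A * (t - t₀)) * (t - t₀) ^ 2 := by positivity
    linarith [hbound t ⟨ht₀t, htt₁⟩, (by rw [← hA0, zero_mul] :
      A * ∫ s in t₀..t, u s + B * (t - t₀) ^ 2 = 0)]
  set T : ℝ := t - t₀ with hT
  have hTnn : 0 ≤ T := by simp [hT]; linarith
  set v : ℝ → ℝ := fun x => ∫ s in t₀..x, u s with hv
  have hint : ∀ x ∈ Icc t₀ t₁, IntervalIntegrable u volume t₀ x := fun x hx =>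
    (hu_cont.mono (Icc_subset_Icc le_rfl hx.2)).intervalIntegrable_of_Icc hx.1
  -- rewrite the hypothesis: the binder swallows the `+` term
  have hbound' : ∀ x ∈ Icc t₀ t₁, u x ≤ A * (v x + B * (x - t₀) ^ 3) := by
    intro x hx
    have h1 : (∫ s in t₀..x, (u s + B * (x - t₀) ^ 2))
        = v x + B * (x - t₀) ^ 2 * (x - t₀) := by
      rw [intervalIntegral.integral_add (hint x hx) (intervalIntegrable_const),
        intervalIntegral.integral_const, smul_eq_mul]
      ring
    have := hbound x hx
    rw [h1] at this
    calc u x ≤ A * (v x + B * (x - t₀) ^ 2 * (x - t₀)) := this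
      _ = A * (v x + B * (x - t₀) ^ 3) := by ring
  -- the comparison function φ
  set φ : ℝ → ℝ := fun x =>
    B * T ^ 2 / A * (Real.exp (A * (x - t₀)) - 1 - A * (x - t₀)) with hφ
  set φ' : ℝ → ℝ := fun x =>
    B * T ^ 2 / A * (A * Real.exp (A * (x - t₀)) - A) with hφ'
  have hφderiv : ∀ x : ℝ, HasDerivAt φ (φ' x) x := by
    intro x
    have h1 : HasDerivAt (fun y : ℝ => A * (y - t₀)) A x := by
      simpa using ((hasDerivAt_id x).sub_const t₀).const_mul A
    have h2 : HasDerivAt (fun y : ℝ => Real.exp (A * (y - t₀)))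
        (Real.exp (A * (x - t₀)) * A) x := h1.exp
    have h3 : HasDerivAt (fun y : ℝ => Real.exp (A * (y - t₀)) - 1 - A * (y - t₀))
        (Real.exp (A * (x - t₀)) * A - A) x := (h2.sub_const 1).sub h1
    have := h3.const_mul (B * T ^ 2 / A)
    convert this using 1
    · rfl
    · rfl
    simp only [hφ']
    ring
  -- v is continuous on [t₀, t]
  have hvcont : ContinuousOn v (Icc t₀ t) := by
    have h0 : IntegrableOn u (uIcc t₀ t) volume := by
      rw [uIcc_of_le ht₀t]
      exact (hu_cont.mono (Icc_subset_Icc le_rfl htt₁)).integrableOn_compact isCompact_Icc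
    have := intervalIntegral.continuousOn_primitive_interval (f := u) (μ := volume) h0
    rwa [uIcc_of_le ht₀t] at this
  -- v has right derivative u x on [t₀, t)
  have hvderiv : ∀ x ∈ Ico t₀ t, HasDerivWithinAt v (u x) (Ici x) x := by
    intro x hx
    have hxt₁ : x < t₁ := lt_of_lt_of_le hx.2 htt₁
    have hmemIoi : Icc t₀ t₁ ∈ nhdsWithin x (Ioi x) := by
      have h1 : Icc x t₁ ∈ nhdsWithin x (Ioi x) := by
        have hIic : Iic t₁ ∈ nhdsWithin x (Ioi x) :=
          mem_nhdsWithin_of_mem_nhds (Iic_mem_nhds hxt₁)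
        have hIci : Ici x ∈ nhdsWithin x (Ioi x) :=
          Filter.mem_of_superset self_mem_nhdsWithin Ioi_subset_Ici_self
        have := Filter.inter_mem hIci hIic
        rwa [Ici_inter_Iic] at this
      exact Filter.mem_of_superset h1 (Icc_subset_Icc hx.1 le_rfl)
    have hmeas : StronglyMeasurableAtFilter u (nhdsWithin x (Ioi x)) volume :=
      ⟨Icc t₀ t₁, hmemIoi, (hu_cont.aestronglyMeasurable measurableSet_Icc)⟩
    have hcw : ContinuousWithinAt u (Ioi x) x :=
      (hu_cont x ⟨hx.1, hxt₁.le⟩).mono_of_mem_nhdsWithin hmemIoi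
    exact intervalIntegral.integral_hasDerivWithinAt_right
      (hint x ⟨hx.1, hxt₁.le⟩) hmeas hcw
  -- Gronwall for f = v − φ with K = A, δ = ε = 0
  have key : ∀ x ∈ Icc t₀ t, v x - φ x ≤ gronwallBound 0 A 0 (x - t₀) := by
    apply le_gronwallBound_of_liminf_deriv_right_le
      (f' := fun x => u x - φ' x)
    · exact hvcont.sub (fun x _ => (hφderiv x).continuousAt.continuousWithinAt)
    · intro x hx r hr
      exact ((hvderiv x hx).sub ((hφderiv x).hasDerivWithinAt)).liminf_right_slope_le hr
    · simp [hv, hφ]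
    · intro x hx
      have hx1 : x ∈ Icc t₀ t₁ := ⟨hx.1, hx.2.le.trans htt₁⟩
      have h1 : u x ≤ A * (v x + B * (x - t₀) ^ 3) := hbound' x hx1
      have h2 : B * (x - t₀) ^ 3 ≤ B * T ^ 2 * (x - t₀) := by
        have hx0 : 0 ≤ x - t₀ := by linarith [hx.1]
        have hxT : x - t₀ ≤ T := by simp [hT]; linarith [hx.2.le]
        calc B * (x - t₀) ^ 3 = B * (x - t₀) ^ 2 * (x - t₀) := by ring
          _ ≤ B * T ^ 2 * (x - t₀) := by
              apply mul_le_mul_of_nonneg_right _ hx0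
              apply mul_le_mul_of_nonneg_left _ hB
              exact pow_le_pow_left₀ hx0 hxT 2
      have hφeq : φ' x = A * φ x + A * (B * T ^ 2 * (x - t₀)) := by
        simp only [hφ, hφ']
        field_simp
        ring
      calc u x - φ' x ≤ A * (v x + B * T ^ 2 * (x - t₀)) - φ' x := by
            have : u x ≤ A * (v x + B * T ^ 2 * (x - t₀)) := by nlinarith [h1, h2]
            linarith
        _ = A * (v x - φ x) + 0 := by rw [hφeq]; ring
  have hvt : v t ≤ φ t := by
    have := key t ⟨ht₀t, le_rfl⟩
    rwa [gronwallBound_ε0_δ0, sub_nonpos] at this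
  -- conclude
  have hfin : u t ≤ A * (v t + B * T ^ 3) := by
    have := hbound' t ⟨ht₀t, htt₁⟩
    simpa [hT] using this
  have hφt : φ t = B * T ^ 2 / A * (Real.exp (A * T) - 1 - A * T) := by simp [hφ, hT]
  have hAne : A ≠ 0 := ne_of_gt hApos
  have : A * (φ t + B * T ^ 3) = B * T ^ 2 * Real.exp (A * T) - B * T ^ 2 := by
    rw [hφt]; field_simp; ring
  have hBT : 0 ≤ B * T ^ 2 := by positivity
  calc u t ≤ A * (v t + B * T ^ 3) := hfin
    _ ≤ A * (φ t + B * T ^ 3) := by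
        apply mul_le_mul_of_nonneg_left _ hA; linarith
    _ = B * T ^ 2 * Real.exp (A * T) - B * T ^ 2 := this
    _ ≤ B * Real.exp (A * (t - t₀)) * (t - t₀) ^ 2 := by
        rw [hT] at hBT ⊢; nlinarith [hBT]
end
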